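/- Let $x^{v_+} - x^{v_-}$ be an element of a reduced Gröbner basis of the toric ideal $I_A$, with $v = v_+ - v_- \in \ker_{\mathbb{Z}}(A)$, and let $\rho \in \{+1,-1\}^n$ be a sign pattern with $v \in H_\rho$. Then $v$ can be written as $v = \lambda_1 u_1 + \cdots + \lambda_{n-d} u_{n-d}$ where $u_1,\ldots,u_{n-d}$ are circuits of $A$ lying in $H_\rho$ and $0 \le \lambda_i \le 1$ for every $i$. -/

import Mathlib

open MvPolynomial

noncomputable section

universe u

variable {α β : Type*} [Fintype α] [Fintype β]

/-- The Laurent monomial `t^a` in the group algebra `ℂ[ℤ^α]` (the Laurent polynomial ring). -/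
def laurentMonomial (a : α → ℤ) : AddMonoidAlgebra ℂ (α →₀ ℤ) :=
  AddMonoidAlgebra.single (Finsupp.equivFunOnFinite.symm a) 1

/-- The monomial map `φ_A : x_j ↦ t^{a_j}` where `a_j` is the `j`-th column of `A`. -/
def phiMap (A : Matrix α β ℤ) : MvPolynomial β ℂ →ₐ[ℂ] AddMonoidAlgebra ℂ (α →₀ ℤ) :=
  MvPolynomial.aeval fun j => laurentMonomial fun i => A i j

/-- The toric ideal `I_A`, the kernel of `φ_A`. -/
def toricIdeal (A : Matrix α β ℤ) : Ideal (MvPolynomial β ℂ) :=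
  RingHom.ker (phiMap A).toRingHom

/-- The leading monomial (exponent vector) of `f` with respect to a monomial order. -/
def leadMon (m : MonomialOrder β) (f : MvPolynomial β ℂ) : β →₀ ℕ :=
  m.toSyn.symm (f.support.sup m.toSyn)

/-- The leading coefficient of `f` with respect to a monomial order. -/
def leadCoeff (m : MonomialOrder β) (f : MvPolynomial β ℂ) : ℂ := f.coeff (leadMon m f)

/-- `G` is a Gröbner basis of `I`: a finite set of nonzero elements of `I` whose leading
monomials generate the initial ideal of `I` (i.e. the leading monomial of every nonzero
element of `I` is divisible by the leading monomial of some element of `G`). -/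
def IsGroebnerBasis (m : MonomialOrder β) (I : Ideal (MvPolynomial β ℂ))
    (G : Set (MvPolynomial β ℂ)) : Prop :=
  G.Finite ∧ (∀ g ∈ G, g ∈ I ∧ g ≠ 0) ∧
    ∀ f ∈ I, f ≠ 0 → ∃ g ∈ G, leadMon m g ≤ leadMon m f

/-- `G` is the reduced Gröbner basis of `I`: a Gröbner basis, all of whose elements are monic,
such that no monomial occurring in an element of `G` is divisible by the leading monomial of
another element of `G`. -/
def IsReducedGroebnerBasis (m : MonomialOrder β) (I : Ideal (MvPolynomial β ℂ))
    (G : Set (MvPolynomial β ℂ)) : Prop :=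
  IsGroebnerBasis m I G ∧ (∀ g ∈ G, leadCoeff m g = 1) ∧
    ∀ g ∈ G, ∀ g' ∈ G, g' ≠ g → ∀ c ∈ g.support, ¬ leadMon m g' ≤ c

/-- The positive part `w⁺` of an integer vector, as an exponent vector. -/
def posPart (w : β → ℤ) : β →₀ ℕ := Finsupp.equivFunOnFinite.symm fun i => (w i).toNat

/-- The negative part `w⁻` of an integer vector, as an exponent vector. -/
def negPart (w : β → ℤ) : β →₀ ℕ := Finsupp.equivFunOnFinite.symm fun i => (-(w i)).toNat

/-- The binomial `x^{w⁺} - x^{w⁻}` associated to an integer vector `w`. -/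
def binom (w : β → ℤ) : MvPolynomial β ℂ := monomial (posPart w) 1 - monomial (negPart w) 1

/-- A circuit of `A`: a nonzero integer vector in `ker A` with coprime entries whose support
is minimal with respect to inclusion among supports of nonzero elements of `ker A`. -/
def IsCircuit (A : Matrix α β ℤ) (u : β → ℤ) : Prop :=
  u ≠ 0 ∧ A.mulVec u = 0 ∧ Finset.gcd Finset.univ u = 1 ∧
    ∀ v : β → ℤ, v ≠ 0 → A.mulVec v = 0 →
      {i | v i ≠ 0} ⊆ {i | u i ≠ 0} → {i | v i ≠ 0} = {i | u i ≠ 0}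

/-- A sign pattern `ρ ∈ {+1,-1}^n`. -/
def IsSignPattern (ρ : β → ℤ) : Prop := ∀ i, ρ i = 1 ∨ ρ i = -1

/-- Membership in `H_ρ = ℝ^n_ρ ∩ ker_ℤ(A)`: integer kernel elements conforming to the sign
pattern `ρ`. -/
def MemH (A : Matrix α β ℤ) (ρ : β → ℤ) (w : β → ℤ) : Prop :=
  A.mulVec w = 0 ∧ ∀ i, 0 ≤ ρ i * w i

/-- `w` belongs to the Hilbert basis of the pointed cone `H_ρ`: it is a nonzero element of
`H_ρ` which cannot be written as the sum of two nonzero elements of `H_ρ` (equivalently, it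
belongs to the unique minimal generating set of the monoid `H_ρ`). -/
def IsHilbertBasisElem (A : Matrix α β ℤ) (ρ : β → ℤ) (w : β → ℤ) : Prop :=
  MemH A ρ w ∧ w ≠ 0 ∧
    ¬ ∃ a b : β → ℤ, MemH A ρ a ∧ MemH A ρ b ∧ a ≠ 0 ∧ b ≠ 0 ∧ w = a + b

/-- `w` is a Graver basis vector of `A`: a member of the Hilbert basis of `H_ρ` for some
sign pattern `ρ`. -/
def IsGraverVector (A : Matrix α β ℤ) (w : β → ℤ) : Prop :=
  ∃ ρ : β → ℤ, IsSignPattern ρ ∧ IsHilbertBasisElem A ρ w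

/-- The Graver basis `Gr_A` of the toric ideal `I_A`, as a set of binomials. -/
def graverBasis (A : Matrix α β ℤ) : Set (MvPolynomial β ℂ) :=
  { p | ∃ w : β → ℤ, IsGraverVector A w ∧ p = binom w }

/-- The degree of the binomial `x^{w⁺} - x^{w⁻}`, namely `max(Σ w⁺, Σ w⁻)`. -/
def degZ (w : β → ℤ) : ℕ := max (∑ i, (w i).toNat) (∑ i, (-(w i)).toNat)

/-- The columns of `A` generate a pointed cone. -/
def PointedCone' (A : Matrix α β ℤ) : Prop :=
  ∀ c : β → ℚ, (∀ i, 0 ≤ c i) → (A.map (Int.cast : ℤ → ℚ)).mulVec c = 0 → c = 0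

/-- The row span of `A` contains the all-ones vector. -/
def RowSpanOne (A : Matrix α β ℤ) : Prop :=
  ∃ w : α → ℚ, (A.map (Int.cast : ℤ → ℚ)).vecMul w = fun _ => 1

/-- The universal Gröbner basis of an ideal: the union of its reduced Gröbner bases over
all term orders. -/
def universalGroebnerBasis {γ : Type u} [Fintype γ] (I : Ideal (MvPolynomial γ ℂ)) :
    Set (MvPolynomial γ ℂ) :=
  { p | ∃ (m : MonomialOrder.{u, u} γ) (G : Set (MvPolynomial γ ℂ)),
      IsReducedGroebnerBasis m I G ∧ p ∈ G }

/-- The initial ideal of `I` with respect to a monomial order: the monomial ideal generated by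
the leading monomials of the nonzero elements of `I`. -/
def initialIdeal (m : MonomialOrder β) (I : Ideal (MvPolynomial β ℂ)) :
    Ideal (MvPolynomial β ℂ) :=
  Ideal.span { p | ∃ f ∈ I, f ≠ 0 ∧ p = monomial (leadMon m f) (1 : ℂ) }


section Aux
open Module

lemma pp_apply (w : β → ℤ) (j : β) : _root_.posPart w j = (w j).toNat := rfl
lemma np_apply (w : β → ℤ) (j : β) : _root_.negPart w j = (-(w j)).toNat := rfl

lemma pp_eq_np_iff {w : β → ℤ} : _root_.posPart w = _root_.negPart w ↔ w = 0 := by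
  constructor
  · intro h; funext j
    have := DFunLike.congr_fun h j
    rw [pp_apply, np_apply] at this
    simpa using (by omega : w j = 0)
  · intro h; subst h; rfl

lemma binom_ne_zero {w : β → ℤ} (hw : w ≠ 0) : binom w ≠ 0 := by
  intro h
  have hne : _root_.posPart w ≠ _root_.negPart w := fun hc => hw (pp_eq_np_iff.mp hc)
  classical
  have := congrArg (fun p => MvPolynomial.coeff (_root_.posPart w) p) h
  simp only [binom, coeff_sub, coeff_monomial, if_pos rfl, if_neg (Ne.symm hne),
    coeff_zero] at this
  norm_num at this

lemma support_binom {w : β → ℤ} (hw : w ≠ 0) :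
    (binom w).support = {_root_.posPart w, _root_.negPart w} := by
  classical
  have hne : _root_.posPart w ≠ _root_.negPart w := fun hc => hw (pp_eq_np_iff.mp hc)
  ext c
  simp only [MvPolynomial.mem_support_iff, binom, coeff_sub, coeff_monomial,
    Finset.mem_insert, Finset.mem_singleton]
  split_ifs with h1 h2 h2 <;> simp_all [eq_comm] <;> norm_num

lemma leadMon_mem_support {m : MonomialOrder β} {f : MvPolynomial β ℂ} (hf : f ≠ 0) :
    leadMon m f ∈ f.support := by
  have hne : f.support.Nonempty := MvPolynomial.support_nonempty.mpr hf
  obtain ⟨a, ha, hab⟩ := Finset.exists_mem_eq_sup f.support hne m.toSyn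
  rw [leadMon, hab]
  simpa using ha

lemma le_leadMon {m : MonomialOrder β} {f : MvPolynomial β ℂ} {c : β →₀ ℕ}
    (h : c ∈ f.support) : m.toSyn c ≤ m.toSyn (leadMon m f) := by
  rw [leadMon]
  simpa using Finset.le_sup (f := m.toSyn) h

lemma phi_monomial (A : Matrix α β ℤ) (c : β →₀ ℕ) :
    phiMap A (monomial c (1 : ℂ)) =
      AddMonoidAlgebra.single (Finsupp.equivFunOnFinite.symm (fun i => ∑ j, (c j : ℤ) * A i j)) 1 := by
  classical
  rw [phiMap, aeval_monomial, map_one, one_mul, Finsupp.prod]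
  have h1 : (∏ j ∈ c.support, (laurentMonomial fun i => A i j) ^ (c j)) =
      ∏ j ∈ c.support, AddMonoidAlgebra.single ((c j) • Finsupp.equivFunOnFinite.symm (fun i => A i j)) ((1:ℂ) ^ (c j)) := by
    apply Finset.prod_congr rfl
    intro j _
    rw [show (laurentMonomial fun i => A i j) = AddMonoidAlgebra.single (Finsupp.equivFunOnFinite.symm (fun i => A i j)) (1:ℂ) from rfl,
      AddMonoidAlgebra.single_pow]
  rw [h1, AddMonoidAlgebra.prod_single]
  congr 1
  · ext i
    rw [Finset.sum_apply']
    have hterm : ∀ k, (c k • Finsupp.equivFunOnFinite.symm fun i => A i k) i = (c k : ℤ) * A i k := by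
      intro k
      simp [Finsupp.smul_apply]
    simp only [hterm, Finsupp.coe_equivFunOnFinite_symm]
    refine Finset.sum_subset (Finset.subset_univ _) ?_
    intro x _ hx
    simp [Finsupp.notMem_support_iff.mp hx]
  · simp

lemma binom_mem_toricIdeal {A : Matrix α β ℤ} {w : β → ℤ} (hw : A.mulVec w = 0) :
    (monomial (Finsupp.equivFunOnFinite.symm fun i => (w i).toNat) (1:ℂ)
      - monomial (Finsupp.equivFunOnFinite.symm fun i => (-(w i)).toNat) 1) ∈ toricIdeal A := by
  have h : (phiMap A) (monomial (Finsupp.equivFunOnFinite.symm fun i => (w i).toNat) (1:ℂ))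
      = (phiMap A) (monomial (Finsupp.equivFunOnFinite.symm fun i => (-(w i)).toNat) 1) := by
    rw [phi_monomial, phi_monomial]
    congr 2
    ext i
    have h0 := congrFun hw i
    simp only [Matrix.mulVec, dotProduct, Pi.zero_apply] at h0
    have : ∑ j, (((Finsupp.equivFunOnFinite.symm fun i => (w i).toNat : β →₀ ℕ) j : ℤ)) * A i j
        - ∑ j, (((Finsupp.equivFunOnFinite.symm fun i => (-(w i)).toNat : β →₀ ℕ) j : ℤ)) * A i j = 0 := by
      rw [← Finset.sum_sub_distrib]
      rw [← h0]
      apply Finset.sum_congr rfl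
      intro j _
      have : ((Finsupp.equivFunOnFinite.symm fun i => (w i).toNat : β →₀ ℕ) j : ℤ)
          - ((Finsupp.equivFunOnFinite.symm fun i => (-(w i)).toNat : β →₀ ℕ) j : ℤ) = w j := by
        show ((w j).toNat : ℤ) - ((-(w j)).toNat : ℤ) = w j
        omega
      rw [← this]; ring
    linarith [this]
  show _ ∈ RingHom.ker _
  rw [RingHom.mem_ker]
  simp only [map_sub, AlgHom.toRingHom_eq_coe, RingHom.coe_coe]
  rw [h, sub_self]

lemma leadMon_binom {m : MonomialOrder β} {w : β → ℤ} (hw : w ≠ 0) :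
    (leadMon m (binom w) = _root_.posPart w ∧
      m.toSyn (_root_.negPart w) ≤ m.toSyn (_root_.posPart w)) ∨
    (leadMon m (binom w) = _root_.negPart w ∧
      m.toSyn (_root_.posPart w) ≤ m.toSyn (_root_.negPart w)) := by
  have h1 := leadMon_mem_support (m := m) (binom_ne_zero hw)
  rw [support_binom hw] at h1
  have hpmem : _root_.posPart w ∈ (binom w).support := by
    rw [support_binom hw]; simp
  have hnmem : _root_.negPart w ∈ (binom w).support := by
    rw [support_binom hw]; simp
  rcases Finset.mem_insert.mp h1 with h | h
  · left; exact ⟨h, h ▸ le_leadMon hnmem⟩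
  · right
    rw [Finset.mem_singleton] at h
    exact ⟨h, h ▸ le_leadMon hpmem⟩

lemma toSyn_le_zero {m : MonomialOrder β} {c : β →₀ ℕ} (h : m.toSyn c ≤ m.toSyn 0) : c = 0 := by
  apply m.toSyn.injective
  rw [map_zero] at h ⊢
  exact le_antisymm h (by simpa using @bot_le _ _ _ (m.toSyn c))

lemma pp_le_np_zero {w : β → ℤ} (h : _root_.posPart w ≤ _root_.negPart w) :
    _root_.posPart w = 0 := by
  ext j
  have := Finsupp.le_def.mp h j
  rw [pp_apply, np_apply] at *
  simp only [Finsupp.coe_zero, Pi.zero_apply]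
  omega

lemma np_le_pp_zero {w : β → ℤ} (h : _root_.negPart w ≤ _root_.posPart w) :
    _root_.negPart w = 0 := by
  ext j
  have := Finsupp.le_def.mp h j
  rw [pp_apply, np_apply] at *
  simp only [Finsupp.coe_zero, Pi.zero_apply]
  omega

lemma pp_zero_np_zero {w : β → ℤ} (hp : _root_.posPart w = 0) (hn : _root_.negPart w = 0) :
    w = 0 := by
  apply pp_eq_np_iff.mp; rw [hp, hn]

lemma primitive_of_reducedGB {A : Matrix α β ℤ}
    {m : MonomialOrder β} {G : Set (MvPolynomial β ℂ)}
    (hG : IsReducedGroebnerBasis m (toricIdeal A) G)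
    {v : β → ℤ} (hvker : A.mulVec v = 0) (hvG : binom v ∈ G) (hv0 : v ≠ 0)
    {u : β → ℤ} (hu0 : u ≠ 0) (huk : A.mulVec u = 0)
    (hp : _root_.posPart u ≤ _root_.posPart v) (hn : _root_.negPart u ≤ _root_.negPart v) :
    u = v := by
  classical
  by_contra hne
  -- key consequence of reducedness
  have hkey : ∀ f ∈ toricIdeal A, f ≠ 0 →
      (∃ c ∈ (binom v).support, leadMon m f ≤ c) →
      leadMon m (binom v) ≤ leadMon m f := by
    intro f hf hf0 ⟨c, hc, hfc⟩
    obtain ⟨g, hgG, hgle⟩ := hG.1.2.2 f hf hf0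
    rcases eq_or_ne g (binom v) with rfl | hgne
    · exact hgle
    · exact absurd (le_trans hgle hfc) (hG.2.2 (binom v) hvG g hgG hgne c hc)
  have hpmem : _root_.posPart v ∈ (binom v).support := by rw [support_binom hv0]; simp
  have hnmem : _root_.negPart v ∈ (binom v).support := by rw [support_binom hv0]; simp
  have hmemu := binom_mem_toricIdeal (A := A) huk
  have hbu := binom_ne_zero hu0
  -- z-step, parameterized by which side collapses
  rcases leadMon_binom (m := m) hu0 with ⟨hlu, _⟩ | ⟨hlu, _⟩
  · -- lead (binom u) = posPart u ≤ posPart v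
    have hkey1 := hkey (binom u) hmemu hbu ⟨_, hpmem, hlu ▸ hp⟩
    rcases leadMon_binom (m := m) hv0 with ⟨hlv, hge⟩ | ⟨hlv, hge⟩
    · -- lead v = posPart v ⇒ posPart u = posPart v
      rw [hlv, hlu] at hkey1
      have hppeq : _root_.posPart u = _root_.posPart v := le_antisymm hp hkey1
      set z := v - u with hz
      have hz0 : z ≠ 0 := sub_ne_zero.mpr (Ne.symm hne)
      have hzk : A.mulVec z = 0 := by rw [hz, Matrix.mulVec_sub, hvker, huk, sub_zero]
      have hzp : _root_.posPart z = 0 := by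
        ext j
        have h1 := DFunLike.congr_fun hppeq j
        have h2 := Finsupp.le_def.mp hn j
        rw [pp_apply, pp_apply] at h1
        rw [np_apply, np_apply] at h2
        rw [pp_apply]
        simp only [hz, Pi.sub_apply, Finsupp.coe_zero, Pi.zero_apply]
        omega
      have hzn : _root_.negPart z ≤ _root_.negPart v := by
        rw [Finsupp.le_def]
        intro j
        have h1 := DFunLike.congr_fun hppeq j
        have h2 := Finsupp.le_def.mp hn j
        rw [pp_apply, pp_apply] at h1
        rw [np_apply, np_apply] at h2
        rw [np_apply, np_apply]
        simp only [hz, Pi.sub_apply]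
        omega
      have hbz := binom_ne_zero hz0
      have hmemz := binom_mem_toricIdeal (A := A) hzk
      rcases leadMon_binom (m := m) hz0 with ⟨hlz, hgez⟩ | ⟨hlz, hgez⟩
      · -- lead (binom z) = posPart z = 0 ⇒ negPart z = 0 ⇒ z = 0
        rw [hzp] at hgez
        exact hz0 (pp_zero_np_zero hzp (toSyn_le_zero hgez))
      · have hkey2 := hkey (binom z) hmemz hbz ⟨_, hnmem, hlz ▸ hzn⟩
        rw [hlv, hlz] at hkey2
        -- posPart v ≤ negPart z ≤ negPart v ⇒ posPart v = 0
        have : _root_.posPart v = 0 := pp_le_np_zero (le_trans hkey2 hzn)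
        rw [this, map_zero] at hge
        have hnv : _root_.negPart v = 0 := by
          apply m.toSyn.injective
          rw [map_zero]
          exact le_antisymm hge (by simpa using @bot_le _ _ _ (m.toSyn (_root_.negPart v)))
        exact hv0 (pp_zero_np_zero this hnv)
    · -- lead v = negPart v, lead u = posPart u: negPart v ≤ posPart u ≤ posPart v
      rw [hlv, hlu] at hkey1
      have h1 : _root_.negPart v ≤ _root_.posPart v := le_trans hkey1 hp
      have h2 : _root_.negPart v = 0 := np_le_pp_zero h1
      rw [h2, map_zero] at hge
      exact hv0 (pp_zero_np_zero (toSyn_le_zero (m := m) (by rw [map_zero]; exact hge)) h2)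
  · -- symmetric: lead (binom u) = negPart u ≤ negPart v
    have hkey1 := hkey (binom u) hmemu hbu ⟨_, hnmem, hlu ▸ hn⟩
    rcases leadMon_binom (m := m) hv0 with ⟨hlv, hge⟩ | ⟨hlv, hge⟩
    · -- lead v = posPart v, lead u = negPart u: posPart v ≤ negPart u ≤ negPart v
      rw [hlv, hlu] at hkey1
      have h1 : _root_.posPart v ≤ _root_.negPart v := le_trans hkey1 hn
      have h2 : _root_.posPart v = 0 := pp_le_np_zero h1
      rw [h2, map_zero] at hge
      exact hv0 (pp_zero_np_zero h2 (toSyn_le_zero (m := m) (by rw [map_zero]; exact hge)))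
    · -- lead v = negPart v ⇒ negPart u = negPart v
      rw [hlv, hlu] at hkey1
      have hnneq : _root_.negPart u = _root_.negPart v := le_antisymm hn hkey1
      set z := v - u with hz
      have hz0 : z ≠ 0 := sub_ne_zero.mpr (Ne.symm hne)
      have hzk : A.mulVec z = 0 := by rw [hz, Matrix.mulVec_sub, hvker, huk, sub_zero]
      have hzn : _root_.negPart z = 0 := by
        ext j
        have h1 := DFunLike.congr_fun hnneq j
        have h2 := Finsupp.le_def.mp hp j
        rw [np_apply, np_apply] at h1
        rw [pp_apply, pp_apply] at h2
        rw [np_apply]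
        simp only [hz, Pi.sub_apply, Finsupp.coe_zero, Pi.zero_apply]
        omega
      have hzp : _root_.posPart z ≤ _root_.posPart v := by
        rw [Finsupp.le_def]
        intro j
        have h1 := DFunLike.congr_fun hnneq j
        have h2 := Finsupp.le_def.mp hp j
        rw [np_apply, np_apply] at h1
        rw [pp_apply, pp_apply] at h2
        rw [pp_apply, pp_apply]
        simp only [hz, Pi.sub_apply]
        omega
      have hbz := binom_ne_zero hz0
      have hmemz := binom_mem_toricIdeal (A := A) hzk
      rcases leadMon_binom (m := m) hz0 with ⟨hlz, hgez⟩ | ⟨hlz, hgez⟩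
      · have hkey2 := hkey (binom z) hmemz hbz ⟨_, hpmem, hlz ▸ hzp⟩
        rw [hlv, hlz] at hkey2
        have : _root_.negPart v = 0 := np_le_pp_zero (le_trans hkey2 hzp)
        rw [this, map_zero] at hge
        have hpv : _root_.posPart v = 0 := by
          apply m.toSyn.injective
          rw [map_zero]
          exact le_antisymm hge (by simpa using @bot_le _ _ _ (m.toSyn (_root_.posPart v)))
        exact hv0 (pp_zero_np_zero hpv this)
      · rw [hzn] at hgez
        exact hz0 (pp_zero_np_zero (toSyn_le_zero hgez) hzn)

lemma shrink {d n : ℕ} {B : Matrix (Fin d) (Fin n) ℚ} {ρ : Fin n → ℤ}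
    (hρ : ∀ i, ρ i = 1 ∨ ρ i = -1)
    {y z : Fin n → ℚ} (hyk : B.mulVec y = 0) (hyc : ∀ i, 0 ≤ (ρ i : ℚ) * y i)
    (hzk : B.mulVec z = 0) (hsub : ∀ j, z j ≠ 0 → y j ≠ 0)
    {j0 : Fin n} (hj0 : 0 < (ρ j0 : ℚ) * z j0) :
    ∃ (t : ℚ) (jm : Fin n), 0 < t ∧ z jm ≠ 0 ∧ (y - t • z) jm = 0 ∧
      B.mulVec (y - t • z) = 0 ∧ (∀ i, 0 ≤ (ρ i : ℚ) * (y - t • z) i) ∧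
      (∀ l, (y - t • z) l ≠ 0 → y l ≠ 0) := by
  classical
  have hρ0 : ∀ i, (ρ i : ℚ) ≠ 0 := by
    intro i; rcases hρ i with h | h <;> simp [h]
  set S : Finset (Fin n) := Finset.univ.filter (fun j => 0 < (ρ j : ℚ) * z j) with hS
  have hSne : S.Nonempty := ⟨j0, by simp [hS, hj0]⟩
  obtain ⟨jm, hjmS, hjmmin⟩ := Finset.exists_min_image S
    (fun j => ((ρ j : ℚ) * y j) / ((ρ j : ℚ) * z j)) hSne
  rw [hS, Finset.mem_filter] at hjmS
  have hzjm : 0 < (ρ jm : ℚ) * z jm := hjmS.2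
  have hzjm' : z jm ≠ 0 := fun h => by simp [h] at hzjm
  have hyjm' : y jm ≠ 0 := hsub jm hzjm'
  have hyjm : 0 < (ρ jm : ℚ) * y jm :=
    lt_of_le_of_ne (hyc jm) (Ne.symm (mul_ne_zero (hρ0 jm) hyjm'))
  set t : ℚ := ((ρ jm : ℚ) * y jm) / ((ρ jm : ℚ) * z jm) with ht
  have ht0 : 0 < t := div_pos hyjm hzjm
  refine ⟨t, jm, ht0, hzjm', ?_, ?_, ?_, ?_⟩
  · -- (y - t z) jm = 0
    have : t = y jm / z jm := by
      rw [ht, mul_div_mul_left _ _ (hρ0 jm)]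
    simp only [Pi.sub_apply, Pi.smul_apply, smul_eq_mul, this]
    field_simp
    ring
  · rw [Matrix.mulVec_sub, Matrix.mulVec_smul, hyk, hzk, smul_zero, sub_zero]
  · intro i
    simp only [Pi.sub_apply, Pi.smul_apply, smul_eq_mul]
    rcases le_or_gt ((ρ i : ℚ) * z i) 0 with h | h
    · nlinarith [hyc i, mul_nonpos_of_nonneg_of_nonpos ht0.le h]
    · have hiS : i ∈ S := by simp [hS, h]
      have := hjmmin i hiS
      have h2 : t * ((ρ i : ℚ) * z i) ≤ (ρ i : ℚ) * y i := (le_div_iff₀ h).mp this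
      nlinarith
  · intro l hl
    intro hyl
    have hzl : z l = 0 := by
      by_contra hzl
      exact (hsub l hzl) hyl
    simp [hyl, hzl] at hl

lemma mulVec_cast {d n : ℕ} (A : Matrix (Fin d) (Fin n) ℤ) (w : Fin n → ℤ) :
    (A.map (Int.cast : ℤ → ℚ)).mulVec (fun j => (w j : ℚ)) = fun i => ((A.mulVec w) i : ℚ) := by
  funext i
  exact ((RingHom.map_mulVec (Int.castRingHom ℚ) A w i).symm : _)

lemma mulVec_cast_zero {d n : ℕ} (A : Matrix (Fin d) (Fin n) ℤ) (w : Fin n → ℤ) :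
    (A.map (Int.cast : ℤ → ℚ)).mulVec (fun j => (w j : ℚ)) = 0 ↔ A.mulVec w = 0 := by
  rw [mulVec_cast]
  constructor
  · intro h
    funext i
    have := congrFun h i
    simpa using this
  · intro h; rw [h]; funext i; simp

lemma exists_elementary {d n : ℕ} {B : Matrix (Fin d) (Fin n) ℚ} {ρ : Fin n → ℤ}
    (hρ : ∀ i, ρ i = 1 ∨ ρ i = -1)
    {x : Fin n → ℚ} (hxk : B.mulVec x = 0) (hxc : ∀ i, 0 ≤ (ρ i : ℚ) * x i) (hx0 : x ≠ 0) :
    ∃ y : Fin n → ℚ, y ≠ 0 ∧ B.mulVec y = 0 ∧ (∀ i, 0 ≤ (ρ i : ℚ) * y i) ∧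
      (∀ j, y j ≠ 0 → x j ≠ 0) ∧
      ∀ z : Fin n → ℚ, z ≠ 0 → B.mulVec z = 0 → (∀ j, z j ≠ 0 → y j ≠ 0) →
        (∀ j, y j ≠ 0 → z j ≠ 0) := by
  classical
  set P : ℕ → Prop := fun N => ∃ y : Fin n → ℚ, y ≠ 0 ∧ B.mulVec y = 0 ∧
    (∀ i, 0 ≤ (ρ i : ℚ) * y i) ∧ (∀ j, y j ≠ 0 → x j ≠ 0) ∧
    (Finset.univ.filter (fun j => y j ≠ 0)).card = N with hP
  have hPx : P ((Finset.univ.filter (fun j => x j ≠ 0)).card) :=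
    ⟨x, hx0, hxk, hxc, fun _ h => h, rfl⟩
  have hex : ∃ N, P N := ⟨_, hPx⟩
  obtain ⟨y, hy0, hyk, hyc, hyx, hycard⟩ := Nat.find_spec hex
  refine ⟨y, hy0, hyk, hyc, hyx, ?_⟩
  intro z hz0 hzk hzy
  by_contra hcon
  push_neg at hcon
  obtain ⟨l, hyl, hzl⟩ := hcon
  -- find a coordinate of z (or -z) that is strictly ρ-positive
  obtain ⟨j1, hj1⟩ : ∃ j1, z j1 ≠ 0 := by
    by_contra hc; push_neg at hc; exact hz0 (funext fun j => hc j)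
  have hρ0 : ∀ i, (ρ i : ℚ) ≠ 0 := by
    intro i; rcases hρ i with h | h <;> simp [h]
  have hj1' : (ρ j1 : ℚ) * z j1 ≠ 0 := mul_ne_zero (hρ0 j1) hj1
  set z' : Fin n → ℚ := if 0 < (ρ j1 : ℚ) * z j1 then z else -z with hz'
  have hz'k : B.mulVec z' = 0 := by
    rw [hz']; split_ifs
    · exact hzk
    · rw [Matrix.mulVec_neg, hzk, neg_zero]
  have hz'sub : ∀ j, z' j ≠ 0 → y j ≠ 0 := by
    intro j hj
    apply hzy
    rw [hz'] at hj
    split_ifs at hj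
    · exact hj
    · simpa using hj
  have hz'j1 : 0 < (ρ j1 : ℚ) * z' j1 := by
    rw [hz']
    split_ifs with h
    · exact h
    · rcases lt_or_gt_of_ne hj1' with h2 | h2
      · simpa using neg_pos.mpr h2
      · exact absurd h2 h
  obtain ⟨t, jm, ht0, hzjm, hjm0, hyk', hyc', hsub'⟩ :=
    shrink hρ hyk hyc hz'k hz'sub hz'j1
  -- y' := y - t • z' is a smaller witness
  have hz'l : z' l = 0 := by rw [hz']; split_ifs <;> simp [hzl]
  have hy'l : (y - t • z') l ≠ 0 := by
    simp only [Pi.sub_apply, Pi.smul_apply, smul_eq_mul, hz'l, mul_zero, sub_zero]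
    exact hyl
  have hy'0 : (y - t • z') ≠ 0 := fun h => hy'l (by rw [h]; rfl)
  have hyjm : y jm ≠ 0 := hz'sub jm hzjm
  have hcard : (Finset.univ.filter (fun j => (y - t • z') j ≠ 0)).card <
      (Finset.univ.filter (fun j => y j ≠ 0)).card := by
    apply Finset.card_lt_card
    rw [Finset.ssubset_iff_of_subset]
    · exact ⟨jm, by simp [hyjm], by simpa using hjm0⟩
    · intro j hj
      simp only [Finset.mem_filter, Finset.mem_univ, true_and] at hj ⊢
      exact hsub' j hj
  have : P ((Finset.univ.filter (fun j => (y - t • z') j ≠ 0)).card) :=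
    ⟨y - t • z', hy'0, hyk', hyc', fun j hj => hyx j (hsub' j hj), rfl⟩
  have hlt := Nat.find_min hex (m := (Finset.univ.filter (fun j => (y - t • z') j ≠ 0)).card)
    (by rw [← hycard]; exact hcard)
  exact hlt this

lemma exists_circuit_of_elementary {d n : ℕ} {A : Matrix (Fin d) (Fin n) ℤ} {ρ : Fin n → ℤ}
    (hρ : ∀ i, ρ i = 1 ∨ ρ i = -1)
    {y : Fin n → ℚ} (hy0 : y ≠ 0) (hyk : (A.map (Int.cast : ℤ → ℚ)).mulVec y = 0)
    (hyc : ∀ i, 0 ≤ (ρ i : ℚ) * y i)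
    (hymin : ∀ z : Fin n → ℚ, z ≠ 0 → (A.map (Int.cast : ℤ → ℚ)).mulVec z = 0 →
      (∀ j, z j ≠ 0 → y j ≠ 0) → (∀ j, y j ≠ 0 → z j ≠ 0)) :
    ∃ (u : Fin n → ℤ) (μ : ℚ), IsCircuit A u ∧ (∀ l, 0 ≤ ρ l * u l) ∧ 0 < μ ∧
      ∀ j, (u j : ℚ) = μ * y j := by
  classical
  set c : ℤ := |Finset.univ.lcm fun j => ((y j).den : ℤ)| with hc
  have hcd : ∀ j, ((y j).den : ℤ) ∣ c := fun j =>
    (dvd_abs _ _).mpr (Finset.dvd_lcm (Finset.mem_univ j))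
  have hc0 : c ≠ 0 := by
    rw [hc, abs_ne_zero]
    rw [Ne, Finset.lcm_eq_zero_iff]
    intro h
    simp only [Set.mem_image, Finset.mem_coe, Finset.mem_univ, true_and] at h
    obtain ⟨j, hj⟩ := h
    exact (Nat.cast_ne_zero.mpr (y j).den_nz) hj
  have hcpos : 0 < c := lt_of_le_of_ne (abs_nonneg _) (Ne.symm hc0)
  set w : Fin n → ℤ := fun j => (y j).num * (c / ((y j).den : ℤ)) with hwdef
  have hw : ∀ j, (w j : ℚ) = (c : ℚ) * y j := by
    intro j
    rw [hwdef]
    push_cast [Int.cast_div_charZero (hcd j)]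
    have hden : ((y j).den : ℚ) ≠ 0 := by
      exact_mod_cast (y j).den_nz
    have hnum : ((y j).num : ℚ) = y j * ((y j).den : ℚ) := by
      rw [← div_eq_iff hden]; exact Rat.num_div_den (y j)
    field_simp
    rw [hnum]
    ring
  have hwsupp : ∀ j, w j ≠ 0 ↔ y j ≠ 0 := by
    intro j
    rw [← Int.cast_ne_zero (α := ℚ), hw j]
    constructor
    · intro h h2; rw [h2, mul_zero] at h; exact h rfl
    · intro h; exact mul_ne_zero (Int.cast_ne_zero.mpr hc0) h
  obtain ⟨j0, hj0⟩ : ∃ j0, y j0 ≠ 0 := by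
    by_contra hcon; push_neg at hcon; exact hy0 (funext fun j => hcon j)
  have hwj0 : w j0 ≠ 0 := (hwsupp j0).mpr hj0
  set g : ℤ := Finset.gcd Finset.univ w with hg
  have hg0 : g ≠ 0 := by
    rw [hg, Ne, Finset.gcd_eq_zero_iff]
    intro h
    exact hwj0 (h j0 (Finset.mem_univ j0))
  have hgnn : 0 ≤ g := Int.nonneg_of_normalize_eq_self (by rw [hg]; exact Finset.normalize_gcd)
  have hgpos : 0 < g := lt_of_le_of_ne hgnn (Ne.symm hg0)
  have hgd : ∀ j, g ∣ w j := fun j => Finset.gcd_dvd (Finset.mem_univ j)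
  set u : Fin n → ℤ := fun j => w j / g with hu
  set μ : ℚ := (c : ℚ) / (g : ℚ) with hμ
  have hμpos : 0 < μ := div_pos (by exact_mod_cast hcpos) (by exact_mod_cast hgpos)
  have hueq : ∀ j, (u j : ℚ) = μ * y j := by
    intro j
    rw [hu]
    simp only
    rw [Int.cast_div_charZero (hgd j), hw j, hμ]
    ring
  have husupp : ∀ j, u j ≠ 0 ↔ y j ≠ 0 := by
    intro j
    rw [← Int.cast_ne_zero (α := ℚ), hueq j]
    constructor
    · intro h h2; rw [h2, mul_zero] at h; exact h rfl
    · intro h; exact mul_ne_zero (ne_of_gt hμpos) h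
  have hu0 : u ≠ 0 := fun h => ((husupp j0).mpr hj0) (by rw [h]; rfl)
  have hcast : (fun j => (u j : ℚ)) = μ • y := funext fun j => by
    rw [hueq j]; rfl
  have huk : A.mulVec u = 0 := by
    rw [← mulVec_cast_zero, hcast, Matrix.mulVec_smul, hyk, smul_zero]
  have hgcd1 : Finset.gcd Finset.univ u = 1 := by
    rw [hu, hg]
    exact Finset.gcd_div_eq_one (Finset.mem_univ j0) hwj0
  refine ⟨u, μ, ⟨hu0, huk, hgcd1, ?_⟩, ?_, hμpos, hueq⟩
  · intro v hv0 hvk hsubs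
    ext i
    simp only [Set.mem_setOf_eq]
    constructor
    · intro h; exact hsubs h
    · intro h
      have hz0 : (fun j => (v j : ℚ)) ≠ 0 := by
        intro hcon
        apply hv0
        funext j
        have h3 : (v j : ℚ) = 0 := congrFun hcon j
        exact_mod_cast h3
      have hzk : (A.map (Int.cast : ℤ → ℚ)).mulVec (fun j => (v j : ℚ)) = 0 :=
        (mulVec_cast_zero A v).mpr hvk
      have hzy : ∀ j, (v j : ℚ) ≠ 0 → y j ≠ 0 := by
        intro j hj
        exact (husupp j).mp (hsubs (by simpa using Int.cast_ne_zero.mp hj))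
      have := hymin _ hz0 hzk hzy i ((husupp i).mp h)
      exact_mod_cast this
  · intro l
    rcases eq_or_ne (u l) 0 with h | h
    · rw [h, mul_zero]
    · have h1 : 0 ≤ (ρ l : ℚ) * (u l : ℚ) := by
        rw [hueq l, show (ρ l : ℚ) * (μ * y l) = μ * ((ρ l : ℚ) * y l) by ring]
        exact mul_nonneg hμpos.le (hyc l)
      exact_mod_cast h1

lemma decomp {d n : ℕ} (A : Matrix (Fin d) (Fin n) ℤ) {ρ : Fin n → ℤ}
    (hρ : ∀ i, ρ i = 1 ∨ ρ i = -1) :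
    ∀ N : ℕ, ∀ x : Fin n → ℚ, (Finset.univ.filter (fun j => x j ≠ 0)).card ≤ N →
    (A.map (Int.cast : ℤ → ℚ)).mulVec x = 0 → (∀ i, 0 ≤ (ρ i : ℚ) * x i) →
    ∃ (k : ℕ) (u : Fin k → Fin n → ℤ) (lam : Fin k → ℚ) (jw : Fin k → Fin n),
      (∀ i, IsCircuit A (u i)) ∧ (∀ i l, 0 ≤ ρ l * u i l) ∧
      (∀ i l, u i l ≠ 0 → x l ≠ 0) ∧ (∀ i, 0 ≤ lam i) ∧
      (∀ l, x l = ∑ i, lam i * (u i l : ℚ)) ∧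
      (∀ i, u i (jw i) ≠ 0) ∧ (∀ i i' : Fin k, i < i' → u i' (jw i) = 0) := by
  intro N
  induction N with
  | zero =>
    intro x hcard hxk hxc
    have hx0 : x = 0 := by
      funext j
      show x j = 0
      by_contra hj
      have : j ∈ Finset.univ.filter (fun j => x j ≠ 0) := by simp [hj]
      have := Finset.card_pos.mpr ⟨j, this⟩
      omega
    refine ⟨0, Fin.elim0, Fin.elim0, Fin.elim0, ?_, ?_, ?_, ?_, ?_, ?_, ?_⟩ <;>
      first
        | exact fun i => i.elim0
        | (intro l; rw [hx0]; simp)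
        | (intro i i'; exact i.elim0)
  | succ N ih =>
    intro x hcard hxk hxc
    rcases eq_or_ne x 0 with rfl | hx0
    · refine ⟨0, Fin.elim0, Fin.elim0, Fin.elim0, ?_, ?_, ?_, ?_, ?_, ?_, ?_⟩ <;>
        first
          | exact fun i => i.elim0
          | (intro l; simp)
          | (intro i i'; exact i.elim0)
    · obtain ⟨y, hy0, hyk, hyc, hyx, hymin⟩ := exists_elementary hρ hxk hxc hx0
      obtain ⟨u0, μ, hu0circ, hu0c, hμpos, hu0eq⟩ :=
        exists_circuit_of_elementary hρ hy0 hyk hyc hymin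
      set z : Fin n → ℚ := fun j => (u0 j : ℚ) with hzdef
      have hzk : (A.map (Int.cast : ℤ → ℚ)).mulVec z = 0 :=
        (mulVec_cast_zero A u0).mpr hu0circ.2.1
      have hzsub : ∀ j, z j ≠ 0 → x j ≠ 0 := by
        intro j hj
        apply hyx
        intro hyj
        rw [hzdef] at hj
        simp only at hj
        rw [hu0eq j, hyj, mul_zero] at hj
        exact hj rfl
      obtain ⟨j1, hj1⟩ : ∃ j1, u0 j1 ≠ 0 := by
        by_contra hcon; push_neg at hcon
        exact hu0circ.1 (funext fun j => hcon j)
      have hj1pos : 0 < (ρ j1 : ℚ) * z j1 := by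
        have h1 : (0:ℤ) ≤ ρ j1 * u0 j1 := hu0c j1
        have h2 : ρ j1 * u0 j1 ≠ 0 := by
          rcases hρ j1 with h | h <;> simp [h, hj1]
        have : (0:ℤ) < ρ j1 * u0 j1 := lt_of_le_of_ne h1 (Ne.symm h2)
        show (0:ℚ) < (ρ j1 : ℚ) * ((u0 j1 : ℤ) : ℚ)
        exact_mod_cast this
      obtain ⟨t, jm, ht0, hzjm, hjm0, hx'k, hx'c, hx'sub⟩ :=
        shrink hρ hxk hxc hzk hzsub hj1pos
      set x' : Fin n → ℚ := x - t • z with hx'def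
      have hcard' : (Finset.univ.filter (fun j => x' j ≠ 0)).card ≤ N := by
        have hss : Finset.univ.filter (fun j => x' j ≠ 0) ⊂
            Finset.univ.filter (fun j => x j ≠ 0) := by
          rw [Finset.ssubset_iff_of_subset]
          · exact ⟨jm, by simp [hzsub jm hzjm], by simpa using hjm0⟩
          · intro j hj
            simp only [Finset.mem_filter, Finset.mem_univ, true_and] at hj ⊢
            exact hx'sub j hj
        have := Finset.card_lt_card hss
        omega
      obtain ⟨k, u, lam, jw, hcirc, hconf, hsupp, hlam, hsum, hjw1, hjw2⟩ :=
        ih x' hcard' hx'k hx'c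
      refine ⟨k + 1, Fin.cons u0 u, Fin.cons t lam, Fin.cons jm jw, ?_, ?_, ?_, ?_, ?_, ?_, ?_⟩
      · intro i
        refine Fin.cases ?_ ?_ i
        · exact hu0circ
        · exact hcirc
      · intro i
        refine Fin.cases ?_ ?_ i
        · exact hu0c
        · exact hconf
      · intro i
        refine Fin.cases ?_ ?_ i
        · intro l hl
          apply hzsub
          rw [hzdef]
          simp only [ne_eq, Int.cast_eq_zero]
          exact_mod_cast hl
        · intro i' l hl
          exact hx'sub l (hsupp i' l hl)
      · intro i
        refine Fin.cases ?_ ?_ i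
        · exact ht0.le
        · exact hlam
      · intro l
        rw [Fin.sum_univ_succ]
        simp only [Fin.cons_zero, Fin.cons_succ]
        have h1 : x' l = ∑ i, lam i * (u i l : ℚ) := hsum l
        have h2 : x l = x' l + t * z l := by
          rw [hx'def]; simp only [Pi.sub_apply, Pi.smul_apply, smul_eq_mul]; ring
        have h3 : z l = (u0 l : ℚ) := rfl
        rw [h2, h1, h3]
        ring
      · intro i
        refine Fin.cases ?_ ?_ i
        · simp only [Fin.cons_zero]
          have : ((u0 jm : ℤ) : ℚ) ≠ 0 := hzjm
          exact_mod_cast this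
        · intro i'
          simp only [Fin.cons_succ]
          exact hjw1 i'
      · intro i i' hlt
        rcases Fin.eq_zero_or_eq_succ i' with rfl | ⟨j', rfl⟩
        · exact absurd hlt (Fin.not_lt_zero _)
        · simp only [Fin.cons_succ]
          rcases Fin.eq_zero_or_eq_succ i with rfl | ⟨j, rfl⟩
          · simp only [Fin.cons_zero]
            by_contra hne
            have hxjm : x' jm = 0 := hjm0
            exact (hsupp j' jm hne) hxjm
          · simp only [Fin.cons_succ]
            exact hjw2 j j' (by simpa using hlt)

lemma li_of_triangular {k n : ℕ} (u : Fin k → Fin n → ℚ) (jw : Fin k → Fin n)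
    (h1 : ∀ i, u i (jw i) ≠ 0) (h2 : ∀ i i' : Fin k, i < i' → u i' (jw i) = 0) :
    LinearIndependent ℚ u := by
  rw [Fintype.linearIndependent_iff]
  intro g hg
  by_contra hcon
  push_neg at hcon
  obtain ⟨i1, hi1⟩ := hcon
  set S : Finset (Fin k) := Finset.univ.filter (fun i => g i ≠ 0) with hS
  have hSne : S.Nonempty := ⟨i1, by simp [hS, hi1]⟩
  set i0 : Fin k := S.min' hSne with hi0
  have hi0S : i0 ∈ S := S.min'_mem hSne
  have hgi0 : g i0 ≠ 0 := by
    rw [hS] at hi0S; simpa using hi0S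
  have heval := congrFun hg (jw i0)
  rw [Finset.sum_apply] at heval
  have hsum : ∑ i, (g i • u i) (jw i0) = g i0 * u i0 (jw i0) := by
    rw [Finset.sum_eq_single i0]
    · rfl
    · intro i _ hne
      rcases lt_or_gt_of_ne hne with hlt | hgt
      · -- i < i0 : g i = 0 by minimality
        have : i ∉ S := fun hmem => absurd (S.min'_le i hmem) (not_le.mpr hlt)
        rw [hS] at this
        simp only [Finset.mem_filter, Finset.mem_univ, true_and, not_not] at this
        simp [this]
      · -- i0 < i : u i (jw i0) = 0
        simp [h2 i0 i hgt]
    · intro h; exact absurd (Finset.mem_univ i0) h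
  rw [hsum] at heval
  exact hgi0 (by
    have := mul_eq_zero.mp heval
    rcases this with h | h
    · exact h
    · exact absurd h (h1 i0))

lemma rank_le_of_kernel {d n k : ℕ} (A : Matrix (Fin d) (Fin n) ℤ) (hrank : A.rank = d)
    (u : Fin k → Fin n → ℚ)
    (hker : ∀ i, (A.map (Int.cast : ℤ → ℚ)).mulVec (u i) = 0)
    (hli : LinearIndependent ℚ u) : k ≤ n - d := by
  classical
  set B := A.map (Int.cast : ℤ → ℚ) with hB
  -- k ≤ finrank ker
  have hmem : ∀ i, u i ∈ LinearMap.ker B.mulVecLin := by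
    intro i
    rw [LinearMap.mem_ker, Matrix.mulVecLin_apply]
    exact hker i
  have hk : k ≤ finrank ℚ (LinearMap.ker B.mulVecLin) := by
    have hli' : LinearIndependent ℚ (fun i => (⟨u i, hmem i⟩ :
        LinearMap.ker B.mulVecLin)) := by
      apply LinearIndependent.of_comp (LinearMap.ker B.mulVecLin).subtype
      exact hli
    simpa using hli'.fintype_card_le_finrank
  -- d ≤ finrank range
  have hd : d ≤ finrank ℚ (LinearMap.range B.mulVecLin) := by
    set M := LinearMap.range A.mulVecLin with hM
    have hfr : finrank ℤ M = d := hrank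
    have b : Basis (Fin d) ℤ M := Module.finBasisOfFinrankEq ℤ M hfr
    set c : Fin d → (Fin d → ℚ) := fun l i => ((b l : Fin d → ℤ) i : ℚ) with hc
    -- ℤ-linear cast map
    set f : (Fin d → ℤ) →ₗ[ℤ] (Fin d → ℚ) :=
      LinearMap.pi (fun i => (Int.castAddHom ℚ).toIntLinearMap.comp (LinearMap.proj i)) with hf
    have hfinj : Function.Injective f := by
      intro a b' hab
      funext i
      have := congrFun hab i
      simp only [hf, LinearMap.pi_apply, LinearMap.comp_apply, LinearMap.proj_apply,
        AddMonoidHom.coe_toIntLinearMap, Int.coe_castAddHom] at this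
      exact_mod_cast this
    have hli1 : LinearIndependent ℤ (fun l => ((b l : Fin d → ℤ))) :=
      b.linearIndependent.map' M.subtype (Submodule.ker_subtype M)
    have hli2 : LinearIndependent ℤ c := by
      have := hli1.map' f (LinearMap.ker_eq_bot.mpr hfinj)
      exact this
    have hli3 : LinearIndependent ℚ c := by
      rw [← LinearIndependent.iff_fractionRing ℤ ℚ]
      exact hli2
    have hcmem : ∀ l, c l ∈ LinearMap.range B.mulVecLin := by
      intro l
      obtain ⟨xv, hxv⟩ := (b l).2
      refine ⟨fun j => (xv j : ℚ), ?_⟩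
      rw [Matrix.mulVecLin_apply]
      funext i
      rw [hB]
      have := (RingHom.map_mulVec (Int.castRingHom ℚ) A xv i).symm
      rw [show ((Int.castRingHom ℚ) ∘ xv) = (fun j => (xv j : ℚ)) from rfl] at this
      calc (A.map (Int.cast : ℤ → ℚ)).mulVec (fun j => (xv j : ℚ)) i
          = ((A.mulVec xv i : ℤ) : ℚ) := this
        _ = c l i := by
            rw [hc]
            congr 1
            rw [← hxv, Matrix.mulVecLin_apply]
    have hli4 : LinearIndependent ℚ (fun l => (⟨c l, hcmem l⟩ :
        LinearMap.range B.mulVecLin)) := by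
      apply LinearIndependent.of_comp (LinearMap.range B.mulVecLin).subtype
      exact hli3
    simpa using hli4.fintype_card_le_finrank
  have hrn := LinearMap.finrank_range_add_finrank_ker B.mulVecLin
  rw [show finrank ℚ (Fin n → ℚ) = n by simp] at hrn
  omega

end Aux

/-- If `x^{v⁺} - x^{v⁻}` is an element of a reduced Gröbner basis of `I_A` and
`v ∈ H_ρ` for a sign pattern `ρ`, then `v` is a convex-coefficient conical combination
`v = λ_1 u_1 + ⋯ + λ_{n-d} u_{n-d}` of `n - d` circuits of `A` lying in `H_ρ`, with
`0 ≤ λ_i ≤ 1` for all `i`. -/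
theorem reducedGB_element_combination_of_circuits (d n : ℕ) (A : Matrix (Fin d) (Fin n) ℤ)
    (hrank : A.rank = d) (hrow : RowSpanOne A)
    (m : MonomialOrder (Fin n)) (G : Set (MvPolynomial (Fin n) ℂ))
    (hG : IsReducedGroebnerBasis m (toricIdeal A) G)
    (v : Fin n → ℤ) (hker : A.mulVec v = 0) (hvG : binom v ∈ G)
    (ρ : Fin n → ℤ) (hρ : IsSignPattern ρ) (hvρ : ∀ i, 0 ≤ ρ i * v i) :
    ∃ (u : Fin (n - d) → Fin n → ℤ) (lam : Fin (n - d) → ℝ),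
      (∀ i, IsCircuit A (u i) ∧ ∀ k, 0 ≤ ρ k * u i k) ∧
      (∀ i, 0 ≤ lam i ∧ lam i ≤ 1) ∧
      ∀ j, (v j : ℝ) = ∑ i, lam i * (u i j : ℝ) := by
  classical
  -- v ≠ 0
  have hv0 : v ≠ 0 := by
    rintro rfl
    have hb0 : binom (0 : Fin n → ℤ) = 0 := by
      rw [binom, pp_eq_np_iff.mpr rfl, sub_self]
    exact (hG.1.2.1 _ hvG).2 hb0
  -- the decomposition over ℚ
  set x : Fin n → ℚ := fun j => (v j : ℚ) with hx
  have hxk : (A.map (Int.cast : ℤ → ℚ)).mulVec x = 0 := (mulVec_cast_zero A v).mpr hker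
  have hxc : ∀ i, 0 ≤ (ρ i : ℚ) * x i := by
    intro i
    have := hvρ i
    show (0:ℚ) ≤ (ρ i : ℚ) * ((v i : ℤ) : ℚ)
    exact_mod_cast this
  obtain ⟨k, u, lam, jw, hcirc, hconf, hsupp, hlam0, hsum, hjw1, hjw2⟩ :=
    decomp A hρ ((Finset.univ.filter (fun j => x j ≠ 0)).card) x le_rfl hxk hxc
  -- k ≤ n - d
  have hkle : k ≤ n - d := by
    apply rank_le_of_kernel A hrank (fun i l => (u i l : ℚ))
    · intro i
      exact (mulVec_cast_zero A (u i)).mpr (hcirc i).2.1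
    · apply li_of_triangular _ jw
      · intro i
        have := hjw1 i
        simp only [ne_eq, Int.cast_eq_zero]
        exact_mod_cast this
      · intro i i' hlt
        have := hjw2 i i' hlt
        simp only [this, Int.cast_zero]
  -- k ≠ 0
  have hk0 : 0 < k := by
    rcases Nat.eq_zero_or_pos k with rfl | h
    · exfalso
      apply hv0
      funext j
      have := hsum j
      simp only [Finset.univ_eq_empty, Finset.sum_empty] at this
      have : (v j : ℚ) = 0 := this
      exact_mod_cast this
    · exact h
  -- every coefficient is ≤ 1
  have hlam1 : ∀ i, lam i ≤ 1 := by
    intro i0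
    by_contra hcon
    push_neg at hcon
    -- key pointwise inequalities
    have key : ∀ l, 0 ≤ (ρ l : ℚ) * ((v l : ℚ) - (u i0 l : ℚ)) ∧
        (lam i0 - 1) * ((ρ l : ℚ) * (u i0 l : ℚ)) ≤ (ρ l : ℚ) * ((v l : ℚ) - (u i0 l : ℚ)) := by
      intro l
      have h1 : (ρ l : ℚ) * (v l : ℚ) = ∑ i, lam i * ((ρ l : ℚ) * (u i l : ℚ)) := by
        have hvl : (v l : ℚ) = ∑ i, lam i * ((u i l : ℤ) : ℚ) := hsum l
        rw [hvl, Finset.mul_sum]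
        exact Finset.sum_congr rfl fun i _ => by ring
      have h2 : ∑ i, lam i * ((ρ l : ℚ) * (u i l : ℚ)) =
          (∑ i ∈ Finset.univ.erase i0, lam i * ((ρ l : ℚ) * (u i l : ℚ)))
            + lam i0 * ((ρ l : ℚ) * (u i0 l : ℚ)) :=
        (Finset.sum_erase_add _ _ (Finset.mem_univ i0)).symm
      have hS : 0 ≤ ∑ i ∈ Finset.univ.erase i0, lam i * ((ρ l : ℚ) * (u i l : ℚ)) := by
        apply Finset.sum_nonneg
        intro i _
        apply mul_nonneg (hlam0 i)
        have := hconf i l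
        exact_mod_cast this
      have hT : 0 ≤ (ρ l : ℚ) * (u i0 l : ℚ) := by
        have := hconf i0 l
        exact_mod_cast this
      constructor
      · nlinarith [h1, h2, hS, hT, hcon]
      · nlinarith [h1, h2, hS, hT, hcon]
    -- integer conformality of v - u i0
    have keyZ : ∀ l, 0 ≤ ρ l * (v l - u i0 l) := by
      intro l
      have := (key l).1
      have h2 : (0 : ℚ) ≤ ((ρ l * (v l - u i0 l) : ℤ) : ℚ) := by push_cast; linarith
      exact_mod_cast h2
    -- posPart/negPart comparisons
    have hple : _root_.posPart (u i0) ≤ _root_.posPart v := by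
      rw [Finsupp.le_def]
      intro l
      rw [pp_apply, pp_apply]
      have h1 := hvρ l
      have h2 : (0:ℤ) ≤ ρ l * u i0 l := hconf i0 l
      have h3 := keyZ l
      rcases hρ l with h | h <;> rw [h] at h1 h2 h3 <;> omega
    have hnle : _root_.negPart (u i0) ≤ _root_.negPart v := by
      rw [Finsupp.le_def]
      intro l
      rw [np_apply, np_apply]
      have h1 := hvρ l
      have h2 : (0:ℤ) ≤ ρ l * u i0 l := hconf i0 l
      have h3 := keyZ l
      rcases hρ l with h | h <;> rw [h] at h1 h2 h3 <;> omega
    have heq : u i0 = v :=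
      primitive_of_reducedGB hG hker hvG hv0 (hcirc i0).1 (hcirc i0).2.1 hple hnle
    -- then v = 0, contradiction
    apply hv0
    funext l
    show v l = 0
    have h3 := (key l).2
    rw [heq] at h3
    simp only [sub_self, mul_zero] at h3
    have hT : (0:ℚ) ≤ (ρ l : ℚ) * (v l : ℚ) := by
      have := hvρ l
      exact_mod_cast this
    have h4' : (ρ l : ℚ) * (v l : ℚ) ≤ 0 := by nlinarith [h3, hcon, hT]
    have h4 : (ρ l : ℚ) * (v l : ℚ) = 0 := le_antisymm h4' hT
    have h5 : (ρ l : ℚ) ≠ 0 := by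
      rcases hρ l with h | h <;> simp [h]
    have h6 : (v l : ℚ) = 0 := by
      rcases mul_eq_zero.mp h4 with h | h
      · exact absurd h h5
      · exact h
    exact_mod_cast h6
  -- padding to n - d
  set i00 : Fin k := ⟨0, hk0⟩ with hi00
  set u' : Fin (n - d) → Fin n → ℤ :=
    fun i => if h : (i : ℕ) < k then u ⟨i, h⟩ else u i00 with hu'
  set lam' : Fin (n - d) → ℝ :=
    fun i => if h : (i : ℕ) < k then ((lam ⟨i, h⟩ : ℚ) : ℝ) else 0 with hlam'
  refine ⟨u', lam', ?_, ?_, ?_⟩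
  · intro i
    by_cases h : (i : ℕ) < k
    · have he : u' i = u ⟨i, h⟩ := by simp only [hu']; rw [dif_pos h]
      rw [he]
      exact ⟨hcirc _, fun l => hconf _ l⟩
    · have he : u' i = u i00 := by simp only [hu']; rw [dif_neg h]
      rw [he]
      exact ⟨hcirc _, fun l => hconf _ l⟩
  · intro i
    by_cases h : (i : ℕ) < k
    · have he : lam' i = ((lam ⟨i, h⟩ : ℚ) : ℝ) := by simp only [hlam']; rw [dif_pos h]
      rw [he]
      constructor
      · exact_mod_cast hlam0 ⟨i, h⟩
      · exact_mod_cast hlam1 ⟨i, h⟩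
    · have he : lam' i = 0 := by simp only [hlam']; rw [dif_neg h]
      rw [he]
      exact ⟨le_rfl, zero_le_one⟩
  · intro j
    -- cast the ℚ identity to ℝ
    have hQ : (v j : ℚ) = ∑ i, lam i * (u i j : ℚ) := hsum j
    have hR : (v j : ℝ) = ∑ i : Fin k, ((lam i : ℚ) : ℝ) * (u i j : ℝ) := by
      have := congrArg (fun q : ℚ => (q : ℝ)) hQ
      push_cast at this ⊢
      convert this using 2
    rw [hR]
    -- now identify the padded sum with the k-sum
    set F : ℕ → ℝ := fun i => if h : i < k then ((lam ⟨i, h⟩ : ℚ) : ℝ) * ((u ⟨i, h⟩ j : ℤ) : ℝ) else 0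
      with hF
    have hL : ∑ i : Fin (n - d), lam' i * (u' i j : ℝ) = ∑ i ∈ Finset.range (n - d), F i := by
      rw [← Fin.sum_univ_eq_sum_range]
      apply Finset.sum_congr rfl
      intro i _
      by_cases h : (i : ℕ) < k
      · have h1 : lam' i = ((lam ⟨i, h⟩ : ℚ) : ℝ) := by simp only [hlam']; rw [dif_pos h]
        have h2 : u' i = u ⟨i, h⟩ := by simp only [hu']; rw [dif_pos h]
        rw [h1, h2]
        simp only [hF]
        rw [dif_pos h]
      · have h1 : lam' i = 0 := by simp only [hlam']; rw [dif_neg h]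
        rw [h1]
        simp only [hF]
        rw [dif_neg h, zero_mul]
    have hRr : ∑ i : Fin k, ((lam i : ℚ) : ℝ) * (u i j : ℝ) = ∑ i ∈ Finset.range k, F i := by
      rw [← Fin.sum_univ_eq_sum_range]
      apply Finset.sum_congr rfl
      intro i _
      simp only [hF]
      rw [dif_pos i.isLt]
    have hext : ∑ i ∈ Finset.range k, F i = ∑ i ∈ Finset.range (n - d), F i := by
      apply Finset.sum_subset (Finset.range_subset_range.mpr hkle)
      intro i _ hi
      rw [Finset.mem_range, not_lt] at hi
      simp only [hF]
      rw [dif_neg (by omega)]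
    rw [hL, hRr, hext]
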